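/- Let U ⊆ ℂᵐ be an open set and let ω₁, …, ω_m : U → ℂ be holomorphic functions. Suppose there exists a real-differentiable function h : U → ℝ such that for every z ∈ U and every v ∈ ℂᵐ the real differential of h satisfies Dh(z)(v) = Re(∑_{j=1}^{m} ω_j(z) · v_j). Then for all j, k and all z ∈ U one has ∂ω_j/∂z_k (z) = ∂ω_k/∂z_j (z), i.e. the holomorphic 1-form ∑_j ω_j dz_j is closed. -/

import Mathlib

open Complex ContinuousLinearMap

noncomputable def Phi (m : ℕ) (j : Fin m) :
    ℂ →L[ℝ] ((Fin m → ℂ) →L[ℝ] ℝ) :=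
  (ContinuousLinearMap.compL ℝ (Fin m → ℂ) ℂ ℝ Complex.reCLM).comp
    ((ContinuousLinearMap.id ℝ ℂ).smulRight
      ((ContinuousLinearMap.proj j : (Fin m → ℂ) →L[ℂ] ℂ).restrictScalars ℝ))

lemma Phi_apply (m : ℕ) (j : Fin m) (a : ℂ) (v : Fin m → ℂ) :
    Phi m j a v = (a * v j).re := by
  simp [Phi, ContinuousLinearMap.smul_apply, smul_eq_mul]

theorem closed_of_realPart_exact
    (m : ℕ) (U : Set (Fin m → ℂ)) (hU : IsOpen U)
    (ω : Fin m → (Fin m → ℂ) → ℂ)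
    (hω : ∀ j, DifferentiableOn ℂ (ω j) U)
    (h : (Fin m → ℂ) → ℝ)
    (D : (Fin m → ℂ) → ((Fin m → ℂ) →L[ℝ] ℝ))
    (hD : ∀ z ∈ U, HasFDerivAt h (D z) z)
    (hDval : ∀ z ∈ U, ∀ v : Fin m → ℂ, D z v = (∑ j, ω j z * v j).re) :
    ∀ j k, ∀ z ∈ U,
      fderiv ℂ (ω j) z (Pi.single k 1) = fderiv ℂ (ω k) z (Pi.single j 1) := by
  intro j k z hz
  have hmem : U ∈ nhds z := hU.mem_nhds hz
  have hdiff : ∀ l : Fin m, DifferentiableAt ℂ (ω l) z := fun l =>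
    (hω l).differentiableAt hmem
  set B : (Fin m → ℂ) →L[ℝ] ((Fin m → ℂ) →L[ℝ] ℝ) :=
    ∑ l, (Phi m l).comp ((fderiv ℂ (ω l) z).restrictScalars ℝ) with hB
  have hG : HasFDerivAt (fun w => ∑ l, Phi m l (ω l w)) B z := by
    rw [hB]
    exact HasFDerivAt.fun_sum (fun l _ =>
      (Phi m l).hasFDerivAt.comp z ((hdiff l).hasFDerivAt.restrictScalars ℝ))
  have hEq : D =ᶠ[nhds z] (fun w => ∑ l, Phi m l (ω l w)) := by
    filter_upwards [hmem] with w hw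
    ext v
    rw [hDval w hw v]
    simp [Phi_apply, Complex.re_sum]
  have hDF : HasFDerivAt D B z := hG.congr_of_eventuallyEq hEq
  have hEv : ∀ᶠ y in nhds z, HasFDerivAt h (D y) y := by
    filter_upwards [hmem] with y hy using hD y hy
  have hsymm := second_derivative_symmetric_of_eventually hEv hDF
  have hBval : ∀ u v : Fin m → ℂ,
      B u v = ∑ l, (fderiv ℂ (ω l) z u * v l).re := by
    intro u v
    simp [hB, ContinuousLinearMap.sum_apply, Phi_apply]
  have key : ∀ u : ℂ,
      (fderiv ℂ (ω j) z (Pi.single k u) * 1).re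
        = (fderiv ℂ (ω k) z (Pi.single j 1) * u).re := by
    intro u
    have := hsymm (Pi.single k u) (Pi.single j 1)
    rw [hBval, hBval] at this
    rw [Finset.sum_eq_single j (fun l _ hl => by simp [Pi.single_eq_of_ne hl])
      (by simp)] at this
    rw [Finset.sum_eq_single k (fun l _ hl => by simp [Pi.single_eq_of_ne hl])
      (by simp)] at this
    simpa using this
  have h1 := key 1
  have h2 := key Complex.I
  have hsmul : (Pi.single k Complex.I : Fin m → ℂ)
      = Complex.I • (Pi.single k 1 : Fin m → ℂ) := by
    ext l
    by_cases hl : l = k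
    · subst hl; simp
    · simp [Pi.single_eq_of_ne hl]
  rw [hsmul, map_smul] at h2
  set a := fderiv ℂ (ω j) z (Pi.single k 1)
  set b := fderiv ℂ (ω k) z (Pi.single j 1)
  have h1' : a.re = b.re := by simpa using h1
  have h2' : a.im = b.im := by
    have : (Complex.I • a).re = (b * Complex.I).re := by simpa using h2
    simpa [Complex.mul_re, Complex.smul_re] using this
  exact Complex.ext h1' h2'
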